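/- arXiv:2006.03655 — 3 statements merged into one kernel-verified Lean document; each statement's English description precedes it below -/
import Mathlib

section
/- Every subtle cardinal is inaccessible. That is, if δ is a subtle cardinal, then δ is an uncountable regular strong limit cardinal. -/
/-- `C` is a club in the ordinal `δ`: `C ⊆ δ`, `C` is unbounded in `δ`, and `C` is
closed in `δ` (every nonzero supremum below `δ` of a nonempty subset of `C` is in `C`). -/
def IsClubIn (C : Set Ordinal) (δ : Ordinal) : Prop :=
  C ⊆ Set.Iio δ ∧
  (∀ α < δ, ∃ β ∈ C, α ≤ β) ∧
  (∀ S : Set Ordinal, S ⊆ C → S.Nonempty → sSup S < δ → sSup S ≠ 0 → sSup S ∈ C)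

/-- A cardinal `δ` is subtle if for every club `C ⊆ δ` and every sequence
`⟨A_α : α ∈ C⟩` with `A_α ⊆ α`, there are `α < β` in `C` with `A_α = A_β ∩ α`. -/
def IsSubtle (δ : Cardinal) : Prop :=
  ∀ C : Set Ordinal, IsClubIn C δ.ord →
    ∀ A : Ordinal → Set Ordinal, (∀ α ∈ C, A α ⊆ Set.Iio α) →
      ∃ α ∈ C, ∃ β ∈ C, α < β ∧ A α = A β ∩ Set.Iio α

section Aux

open Cardinal Ordinal Set

universe u

lemma aux_lt_add_one (γ : Ordinal.{u}) : γ < γ + 1 := by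
  rw [Ordinal.add_one_eq_succ]; exact Order.lt_succ γ

/-- A subtle cardinal is infinite. -/
lemma aux_subtle_aleph0_le {δ : Cardinal.{u}} (h : IsSubtle δ) : ℵ₀ ≤ δ := by
  by_contra hfin
  push_neg at hfin
  have hord : δ.ord < ω := by
    have := Cardinal.ord_lt_ord.mpr hfin
    rwa [Cardinal.ord_aleph0] at this
  set C : Set Ordinal.{u} := {γ | γ + 1 = δ.ord} with hCdef
  have hclub : IsClubIn C δ.ord := by
    refine ⟨?_, ?_, ?_⟩
    · intro γ hγ
      have : γ < γ + 1 := aux_lt_add_one γ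
      exact Set.mem_Iio.mpr (hγ ▸ this)
    · intro α hα
      have hne : δ.ord ≠ 0 := fun h0 => by simp [h0] at hα
      rcases Ordinal.zero_or_succ_or_isSuccLimit δ.ord with h0 | ⟨p, hp⟩ | hlim
      · exact absurd h0 hne
      · refine ⟨p, ?_, ?_⟩
        · show p + 1 = δ.ord
          rw [Ordinal.add_one_eq_succ, hp]
        · have : α < Order.succ p := hp ▸ hα
          exact Order.lt_succ_iff.mp this
      · exact absurd (Ordinal.omega0_le_of_isSuccLimit hlim) (not_le.mpr hord)
    · intro S hS hne hlt h0
      obtain ⟨s, hs⟩ := hne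
      have hSsing : S = {s} := by
        apply Set.eq_singleton_iff_unique_mem.mpr
        refine ⟨hs, fun x hx => ?_⟩
        have h1 : x + 1 = δ.ord := hS hx
        have h2 : s + 1 = δ.ord := hS hs
        have : Order.succ x = Order.succ s := by
          rw [← Ordinal.add_one_eq_succ, ← Ordinal.add_one_eq_succ, h1, h2]
        exact Order.succ_eq_succ_iff.mp this
      rw [hSsing, csSup_singleton]
      exact hS hs
  obtain ⟨α, hα, β, hβ, hab, -⟩ := h C hclub (fun _ => ∅) (fun _ _ => Set.empty_subset _)
  have h1 : α + 1 = δ.ord := hα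
  have h2 : β + 1 = δ.ord := hβ
  have : Order.succ α = Order.succ β := by
    rw [← Ordinal.add_one_eq_succ, ← Ordinal.add_one_eq_succ, h1, h2]
  exact absurd (Order.succ_eq_succ_iff.mp this) hab.ne

/-- A subtle cardinal is uncountable. -/
lemma aux_subtle_ne_aleph0 {δ : Cardinal.{u}} (h : IsSubtle δ) : δ ≠ ℵ₀ := by
  rintro rfl
  have hord : (ℵ₀ : Cardinal.{u}).ord = ω := Cardinal.ord_aleph0
  set C : Set Ordinal.{u} := {γ | 0 < γ ∧ γ < ω} with hCdef
  have hclub : IsClubIn C (ℵ₀ : Cardinal.{u}).ord := by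
    rw [hord]
    refine ⟨fun γ hγ => Set.mem_Iio.mpr hγ.2, ?_, ?_⟩
    · intro α hα
      refine ⟨max α 1, ⟨?_, ?_⟩, le_max_left _ _⟩
      · exact lt_of_lt_of_le one_pos (le_max_right _ _)
      · exact max_lt hα Ordinal.one_lt_omega0
    · intro S hS hne hlt h0
      exact ⟨pos_iff_ne_zero.mpr h0, hlt⟩
  obtain ⟨α, hα, β, hβ, hab, hA⟩ :=
    h C hclub (fun α => {γ | γ + 1 = α})
      (fun α _ γ hγ => Set.mem_Iio.mpr (hγ ▸ aux_lt_add_one γ))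
  obtain ⟨hα0, hαω⟩ := hα
  rcases Ordinal.zero_or_succ_or_isSuccLimit α with h0 | ⟨p, hp⟩ | hlim
  · exact absurd h0 hα0.ne'
  · have hpA : p ∈ {γ | γ + 1 = α} := by
      show p + 1 = α; rw [Ordinal.add_one_eq_succ, hp]
    rw [hA] at hpA
    have : p + 1 = β := hpA.1
    have : α = β := by rw [← this, Ordinal.add_one_eq_succ, hp]
    exact absurd this hab.ne
  · exact absurd (Ordinal.omega0_le_of_isSuccLimit hlim) (not_le.mpr hαω)

/-- A subtle cardinal is regular. -/
lemma aux_subtle_cof {δ : Cardinal.{u}} (h : IsSubtle δ) (hℵ : ℵ₀ ≤ δ) :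
    δ ≤ δ.ord.cof := by
  by_contra hcof
  push_neg at hcof
  have hlim : Order.IsSuccLimit δ.ord := Cardinal.isSuccLimit_ord hℵ
  set κ : Cardinal.{u} := δ.ord.cof with hκdef
  have hκδ : κ.ord < δ.ord := Cardinal.ord_lt_ord.mpr hcof
  obtain ⟨f, hf⟩ := Ordinal.exists_blsub_cof δ.ord
  -- f : ∀ a < κ.ord, Ordinal, blsub = δ.ord
  have hcofinal : ∀ α < δ.ord, ∃ ξ, ∃ hξ : ξ < κ.ord, α ≤ f ξ hξ := by
    intro α hα
    have : α < Ordinal.blsub κ.ord f := hf ▸ hα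
    exact Ordinal.lt_blsub_iff.mp this
  have hfval : ∀ ξ (hξ : ξ < κ.ord), f ξ hξ < δ.ord := fun ξ hξ => hf ▸ Ordinal.lt_blsub f ξ hξ
  set F : Set Ordinal.{u} := {y | ∃ ξ, ∃ hξ : ξ < κ.ord, y = f ξ hξ + 1} with hFdef
  set C : Set Ordinal.{u} := {γ | γ < δ.ord ∧ κ.ord < γ ∧ sSup (F ∩ Set.Iic γ) = γ} with hCdef
  have hbdd : ∀ γ : Ordinal.{u}, BddAbove (F ∩ Set.Iic γ) := fun γ => ⟨γ, fun x hx => hx.2⟩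
  have hFne : ∀ γ ∈ C, (F ∩ Set.Iic γ).Nonempty := by
    intro γ hγ
    by_contra hemp
    rw [Set.not_nonempty_iff_eq_empty] at hemp
    have : sSup (F ∩ Set.Iic γ) = 0 := by rw [hemp, csSup_empty]; rfl
    rw [hγ.2.2] at this
    exact absurd this (pos_iff_ne_zero.mp (lt_of_le_of_lt (zero_le (a := κ.ord)) hγ.2.1)).elim
  have hbetween : ∀ α β, β ∈ C → α < β → ∃ ξ, ∃ hξ : ξ < κ.ord, α ≤ f ξ hξ ∧ f ξ hξ < β := by
    intro α β hβ hab
    have hlt : α < sSup (F ∩ Set.Iic β) := by rw [hβ.2.2]; exact hab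
    obtain ⟨y, hy, hαy⟩ := exists_lt_of_lt_csSup (hFne β hβ) hlt
    obtain ⟨⟨ξ, hξ, rfl⟩, hyβ⟩ := hy
    refine ⟨ξ, hξ, ?_, ?_⟩
    · exact Order.lt_succ_iff.mp (by rwa [Ordinal.add_one_eq_succ] at hαy)
    · exact lt_of_lt_of_le (aux_lt_add_one _) hyβ
  have hclub : IsClubIn C δ.ord := by
    refine ⟨fun γ hγ => Set.mem_Iio.mpr hγ.1, ?_, ?_⟩
    · -- unbounded
      intro α hα
      obtain ⟨ξ, hξ, hmax⟩ := hcofinal (max α κ.ord) (max_lt hα hκδ)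
      set γ := f ξ hξ + 1 with hγdef
      have hγδ : γ < δ.ord := by
        rw [hγdef, Ordinal.add_one_eq_succ]
        exact hlim.succ_lt (hfval ξ hξ)
      have hγF : γ ∈ F := ⟨ξ, hξ, rfl⟩
      refine ⟨γ, ⟨hγδ, ?_, ?_⟩, ?_⟩
      · exact lt_of_le_of_lt (le_trans (le_max_right _ _) hmax) (aux_lt_add_one _)
      · refine le_antisymm (csSup_le ⟨γ, hγF, le_refl γ⟩ (fun x hx => hx.2)) ?_
        exact le_csSup (hbdd γ) ⟨hγF, le_refl γ⟩
      · exact le_of_lt (lt_of_le_of_lt (le_trans (le_max_left _ _) hmax) (aux_lt_add_one _))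
    · -- closed
      intro S hS hne hlt h0
      set σ := sSup S with hσdef
      obtain ⟨s, hs⟩ := hne
      have hbddS : BddAbove S := ⟨δ.ord, fun x hx => le_of_lt (hS hx).1⟩
      have hsσ : s ≤ σ := le_csSup hbddS hs
      have hκσ : κ.ord < σ := lt_of_lt_of_le (hS hs).2.1 hsσ
      have hFσne : (F ∩ Set.Iic σ).Nonempty := by
        obtain ⟨y, hy⟩ := hFne s (hS hs)
        exact ⟨y, hy.1, le_trans hy.2 hsσ⟩
      refine ⟨hlt, hκσ, ?_⟩
      refine le_antisymm (csSup_le hFσne (fun x hx => hx.2)) ?_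
      by_contra hτ
      push_neg at hτ
      obtain ⟨t, ht, hτt⟩ := exists_lt_of_lt_csSup ⟨s, hs⟩ hτ
      have htC := hS ht
      have : sSup (F ∩ Set.Iic σ) < sSup (F ∩ Set.Iic t) := by rw [htC.2.2]; exact hτt
      obtain ⟨x, hx, hx2⟩ := exists_lt_of_lt_csSup (hFne t htC) this
      have hxσ : x ∈ F ∩ Set.Iic σ := ⟨hx.1, le_trans hx.2 (le_csSup hbddS ht)⟩
      exact absurd (le_csSup (hbdd σ) hxσ) (not_le.mpr hx2)
  set A : Ordinal.{u} → Set Ordinal.{u} := fun α => {ξ | ∃ hξ : ξ < κ.ord, f ξ hξ < α} with hAdef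
  have hreg : ∀ α ∈ C, A α ⊆ Set.Iio α := by
    rintro α hα ξ ⟨hξ, -⟩
    exact Set.mem_Iio.mpr (lt_trans hξ hα.2.1)
  obtain ⟨α, hα, β, hβ, hab, hA⟩ := h C hclub A hreg
  obtain ⟨ξ, hξ, hαf, hfβ⟩ := hbetween α β hβ hab
  have hmem : ξ ∈ A β ∩ Set.Iio α := ⟨⟨hξ, hfβ⟩, Set.mem_Iio.mpr (lt_trans hξ hα.2.1)⟩
  rw [← hA] at hmem
  obtain ⟨hξ', hfα⟩ := hmem
  exact absurd hαf (not_le.mpr hfα)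

/-- A subtle cardinal is a strong limit. -/
lemma aux_subtle_strong_limit {δ : Cardinal.{u}} (h : IsSubtle δ) (hℵ : ℵ₀ ≤ δ)
    (lam : Cardinal.{u}) (hlam : lam < δ) : 2 ^ lam < δ := by
  by_contra hp
  push_neg at hp
  have hlim : Order.IsSuccLimit δ.ord := Cardinal.isSuccLimit_ord hℵ
  have hlamδ : lam.ord < δ.ord := Cardinal.ord_lt_ord.mpr hlam
  have hcard : #(Set.Iio δ.ord) ≤ #(Set (Set.Iio lam.ord)) := by
    rw [Ordinal.mk_Iio_ordinal, Cardinal.mk_set, Ordinal.mk_Iio_ordinal,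
      Cardinal.card_ord, Cardinal.card_ord]
    calc Cardinal.lift.{u+1} δ ≤ Cardinal.lift.{u+1} (2 ^ lam) := Cardinal.lift_le.mpr hp
    _ = 2 ^ Cardinal.lift.{u+1} lam := by rw [Cardinal.lift_power, Cardinal.lift_two]
  obtain ⟨j⟩ := (Cardinal.le_def _ _).mp hcard
  set C : Set Ordinal.{u} := Set.Ioo lam.ord δ.ord with hCdef
  have hclub : IsClubIn C δ.ord := by
    refine ⟨fun γ hγ => Set.mem_Iio.mpr hγ.2, ?_, ?_⟩
    · intro α hα
      refine ⟨max α (lam.ord + 1), ⟨?_, ?_⟩, le_max_left _ _⟩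
      · exact lt_of_lt_of_le (aux_lt_add_one _) (le_max_right _ _)
      · refine max_lt hα ?_
        rw [Ordinal.add_one_eq_succ]
        exact hlim.succ_lt hlamδ
    · intro S hS hne hlt h0
      obtain ⟨s, hs⟩ := hne
      have hbddS : BddAbove S := ⟨δ.ord, fun x hx => le_of_lt (hS hx).2⟩
      exact ⟨lt_of_lt_of_le (hS hs).1 (le_csSup hbddS hs), hlt⟩
  set A : Ordinal.{u} → Set Ordinal.{u} :=
    fun α => {γ | ∃ hγ : γ < lam.ord, ∃ hα : α < δ.ord, (⟨γ, hγ⟩ : Set.Iio lam.ord) ∈ j ⟨α, hα⟩}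
    with hAdef
  have hreg : ∀ α ∈ C, A α ⊆ Set.Iio α := by
    rintro α hα γ ⟨hγ, -⟩
    exact Set.mem_Iio.mpr (lt_trans hγ hα.1)
  obtain ⟨α, hα, β, hβ, hab, hA⟩ := h C hclub A hreg
  have hαδ : α < δ.ord := hα.2
  have hβδ : β < δ.ord := hβ.2
  have hmemA : ∀ (x : Set.Iio lam.ord) (γ : Ordinal) (hγδ : γ < δ.ord),
      (x : Ordinal) ∈ A γ ↔ x ∈ j ⟨γ, hγδ⟩ := by
    rintro ⟨x, hx⟩ γ hγδ
    constructor
    · rintro ⟨hγ, hδ, hmem⟩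
      convert hmem using 2
    · intro hmem
      exact ⟨hx, hγδ, hmem⟩
  have hjeq : j ⟨α, hαδ⟩ = j ⟨β, hβδ⟩ := by
    ext x
    rw [← hmemA x α hαδ, ← hmemA x β hβδ, hA]
    have hxα : (x : Ordinal) < α := lt_trans x.2 hα.1
    constructor
    · rintro ⟨h1, -⟩; exact h1
    · intro h1; exact ⟨h1, Set.mem_Iio.mpr hxα⟩
  have : α = β := congrArg Subtype.val (j.injective hjeq)
  exact absurd this hab.ne

end Aux

/-- Every subtle cardinal is inaccessible: uncountable, regular, and a strong limit. -/
theorem subtle_isInaccessible (δ : Cardinal) (h : IsSubtle δ) :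
    Cardinal.aleph0 < δ ∧ δ.IsRegular ∧ δ.IsStrongLimit := by
  have h1 : Cardinal.aleph0 ≤ δ := aux_subtle_aleph0_le h
  have h2 : Cardinal.aleph0 < δ := lt_of_le_of_ne h1 (Ne.symm (aux_subtle_ne_aleph0 h))
  refine ⟨h2, ⟨h1, aux_subtle_cof h h1⟩, ?_, fun x hx => aux_subtle_strong_limit h h1 x hx⟩
  rintro rfl
  exact absurd h2 (by simp)
end

section
/- Every subtle cardinal is regular: if δ is a subtle cardinal, then the cofinality of δ equals δ. -/
/-- Every subtle cardinal is regular: its cofinality equals itself. -/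
theorem subtle_isRegular (δ : Cardinal) (h : IsSubtle δ) :
    δ.ord.cof = δ := by
  refine le_antisymm (Ordinal.cof_ord_le δ) ?_
  by_contra hnle
  have hlt : δ.ord.cof < δ := lt_of_not_ge hnle
  rcases Ordinal.zero_or_succ_or_isSuccLimit δ.ord with h0 | ⟨γ, hγ⟩ | hlim
  · -- δ.ord = 0
    have hδ0 : δ = 0 := by
      have := Cardinal.card_ord δ; rw [h0] at this; simpa using this.symm
    rw [hδ0] at hlt
    simp at hlt
  · -- successor case: club {γ}
    obtain ⟨α, hα, β, hβ, hab, -⟩ :=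
      h {γ} (by
        refine ⟨?_, ?_, ?_⟩
        · intro x hx
          rw [Set.mem_singleton_iff] at hx; subst hx
          rw [← hγ]; exact Set.mem_Iio.2 (Order.lt_succ _)
        · intro α hα
          refine ⟨γ, rfl, ?_⟩
          rw [← hγ] at hα; exact Order.le_of_lt_succ hα
        · intro S hS hSne _ _
          obtain ⟨s, hs⟩ := hSne
          have hSeq : S = {γ} := le_antisymm hS (by
            intro x hx
            rw [Set.mem_singleton_iff] at hx; subst hx
            have h2 := hS hs; rw [Set.mem_singleton_iff] at h2; rwa [← h2])
          rw [hSeq, csSup_singleton]; rfl)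
        (fun _ => ∅) (by intro α _; simp)
    rw [Set.mem_singleton_iff] at hα hβ
    subst hα; subst hβ; exact lt_irrefl _ hab
  · -- limit case
    obtain ⟨f, hf⟩ := Ordinal.exists_fundamental_sequence δ.ord
    have hF : ∃ F : Ordinal → Ordinal,
        (∀ i j, i < j → j < δ.ord.cof.ord → F i < F j) ∧
        (∀ x < δ.ord, ∃ j, j < δ.ord.cof.ord ∧ x < F j) ∧
        (∀ j, j < δ.ord.cof.ord → F j < δ.ord) := by
      refine ⟨fun j => if h : j < δ.ord.cof.ord then f j h else 0, ?_, ?_, ?_⟩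
      · intro i j hij hj
        dsimp only
        rw [dif_pos hj, dif_pos (hij.trans hj)]
        exact hf.2.1 _ _ hij
      · intro x hx
        have h1 : x + 1 < Ordinal.blsub δ.ord.cof.ord f := by
          rw [hf.blsub_eq]; exact hlim.succ_lt hx
        obtain ⟨i, hi, hle⟩ := Ordinal.lt_blsub_iff.1 h1
        refine ⟨i, hi, ?_⟩
        dsimp only
        rw [dif_pos hi]
        exact lt_of_lt_of_le (lt_of_lt_of_le (lt_add_one x) le_rfl) hle
      · intro j hj
        dsimp only
        rw [dif_pos hj]
        have := Ordinal.lt_blsub f j hj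
        rwa [hf.blsub_eq] at this
    obtain ⟨F, Fmono, Fcof, Flt⟩ := hF
    clear hf
    set lo := δ.ord.cof.ord with hlo
    have Fmono' : ∀ i j, i ≤ j → j < lo → F i ≤ F j := by
      intro i j hij hj
      rcases eq_or_lt_of_le hij with rfl | hij
      · exact le_rfl
      · exact (Fmono i j hij hj).le
    set V : Set Ordinal := F '' Set.Iio lo with hV
    set C : Set Ordinal := {α | lo < α ∧ α < δ.ord ∧ α = sSup (V ∩ Set.Iic α)} with hC
    set g : Ordinal → Ordinal := fun α => sInf {j | j < lo ∧ α < F j} with hg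
    have hgmem : ∀ α < δ.ord, g α < lo ∧ α < F (g α) := by
      intro α hα
      have hne : {j | j < lo ∧ α < F j}.Nonempty := by
        obtain ⟨j, hj, hx⟩ := Fcof α hα
        exact ⟨j, hj, hx⟩
      exact csInf_mem hne
    have hlo_lt : lo < δ.ord := Cardinal.lt_ord.2 (by rw [hlo, Cardinal.card_ord]; exact hlt)
    -- g strictly increasing into lo on pairs with β ∈ C
    have hginj : ∀ α β, α < δ.ord → β ∈ C → α < β → g α < g β := by
      intro α β hα hβ hab
      obtain ⟨-, hβδ, hβsup⟩ := hβ
      have hex : ∃ j, j < lo ∧ α < F j ∧ F j ≤ β := by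
        by_contra hcon
        push_neg at hcon
        have hub : sSup (V ∩ Set.Iic β) ≤ α := by
          apply csSup_le'
          rintro x ⟨⟨j, hj, rfl⟩, hx2⟩
          by_contra hgt
          exact absurd (Set.mem_Iic.1 hx2)
            (not_le.2 (hcon j hj (not_le.1 hgt)))
        rw [← hβsup] at hub
        exact absurd hab (not_lt.2 hub)
      obtain ⟨j, hj, hαj, hjβ⟩ := hex
      have hgα : g α ≤ j := csInf_le (OrderBot.bddBelow _) ⟨hj, hαj⟩
      obtain ⟨hgβlo, hgβ⟩ := hgmem β hβδ
      by_contra hcon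
      have hle : g β ≤ g α := not_lt.1 hcon
      have hFle : F (g β) ≤ F j := Fmono' _ _ (hle.trans hgα) hj
      exact absurd hgβ (not_lt.2 (hFle.trans hjβ))
    have hclub : IsClubIn C δ.ord := by
      refine ⟨fun x hx => Set.mem_Iio.2 hx.2.1, ?_, ?_⟩
      · intro α hα
        obtain ⟨j, hj, hxj⟩ := Fcof (max α lo) (max_lt hα hlo_lt)
        refine ⟨F j, ⟨lt_of_le_of_lt (le_max_right α lo) hxj, Flt j hj, ?_⟩,
          (le_max_left α lo).trans hxj.le⟩
        apply le_antisymm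
        · exact le_csSup ⟨F j, fun x hx => Set.mem_Iic.1 hx.2⟩
            ⟨⟨j, hj, rfl⟩, Set.mem_Iic.2 le_rfl⟩
        · exact csSup_le' fun x hx => Set.mem_Iic.1 hx.2
      · intro S hS hSne hSlt hS0
        obtain ⟨s, hs⟩ := hSne
        have hsC := hS hs
        have hbddS : BddAbove S := ⟨δ.ord, fun y hy => ((hS hy).2.1).le⟩
        refine ⟨lt_of_lt_of_le hsC.1 (le_csSup hbddS hs), hSlt, ?_⟩
        apply le_antisymm
        · apply csSup_le ⟨s, hs⟩
          intro x hx
          have hxC := hS hx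
          have hxsup := hxC.2.2
          have hxle : x ≤ sSup S := le_csSup hbddS hx
          have hne : (V ∩ Set.Iic x).Nonempty := by
            rw [Set.nonempty_iff_ne_empty]
            intro he
            rw [he, csSup_empty] at hxsup
            have : (0 : Ordinal) < x := lt_of_le_of_lt (zero_le (a := lo)) hxC.1
            rw [hxsup] at this
            exact lt_irrefl _ this
          calc x = sSup (V ∩ Set.Iic x) := hxsup
            _ ≤ sSup (V ∩ Set.Iic (sSup S)) := by
                apply csSup_le_csSup ⟨sSup S, fun y hy => Set.mem_Iic.1 hy.2⟩ hne
                intro y hy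
                exact ⟨hy.1, Set.mem_Iic.2 ((Set.mem_Iic.1 hy.2).trans hxle)⟩
        · exact csSup_le' fun x hx => Set.mem_Iic.1 hx.2
    obtain ⟨α, hαC, β, hβC, hab, hAB⟩ :=
      h C hclub (fun α => {g α}) (by
        intro α hαC x hx
        rw [Set.mem_singleton_iff] at hx; subst hx
        exact Set.mem_Iio.2 (lt_trans ((hgmem α hαC.2.1).1) hαC.1))
    have hmem : g α ∈ ({g β} ∩ Set.Iio α : Set Ordinal) := by
      rw [← hAB]; exact rfl
    have heq : g α = g β := Set.mem_singleton_iff.1 hmem.1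
    exact absurd (hginj α β hαC.2.1 hβC hab) (by rw [heq]; exact lt_irrefl _)
end

section
/- Every subtle cardinal is a strong limit cardinal: if δ is a subtle cardinal, then for every cardinal λ < δ one has 2^λ < δ. -/
/-- Every subtle cardinal is a strong limit: `2 ^ λ < δ` for every cardinal `λ < δ`. -/
theorem subtle_isStrongLimit (δ : Cardinal) (h : IsSubtle δ) :
    ∀ lam : Cardinal, lam < δ → 2 ^ lam < δ := by
  -- δ.ord ≠ 0
  have hne : δ.ord ≠ 0 := by
    intro h0
    obtain ⟨α, hα, -⟩ := h ∅ ⟨by simp, fun α hα => absurd hα (by rw [h0]; exact not_lt.mpr (zero_le (a := α))),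
      fun S hS hne _ _ => absurd (Set.subset_empty_iff.mp hS) (Set.nonempty_iff_ne_empty.mp hne)⟩
      (fun _ => ∅) (by simp)
    exact hα
  -- δ.ord is a limit: a < δ.ord → a + 1 < δ.ord
  have hlim : ∀ a < δ.ord, a + 1 < δ.ord := by
    intro a ha
    by_contra hnot
    have heq : δ.ord = a + 1 := le_antisymm (not_lt.mp hnot) (Order.add_one_le_of_lt ha)
    have hclub : IsClubIn {a} δ.ord := by
      refine ⟨by simp [heq], ?_, ?_⟩
      · intro α hα
        exact ⟨a, rfl, by rw [heq, Order.lt_add_one_iff] at hα; exact hα⟩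
      · intro S hS hne _ _
        have hSa : S = {a} := (Set.Nonempty.subset_singleton_iff hne).mp hS
        rw [hSa, csSup_singleton]
        rfl
    obtain ⟨α, hα, β, hβ, hlt, -⟩ := h {a} hclub (fun _ => ∅) (by simp)
    rw [Set.mem_singleton_iff] at hα hβ
    exact absurd hlt (by rw [hα, hβ]; exact lt_irrefl a)
  intro lam hlam
  by_contra hnot
  have hle : δ ≤ 2 ^ lam := not_lt.mp hnot
  have hordlt : lam.ord < δ.ord := Cardinal.ord_lt_ord.mpr hlam
  -- injection from Iio δ.ord to Set (Iio lam.ord)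
  have hcard : Cardinal.mk (Set.Iio δ.ord) ≤ Cardinal.mk (Set (Set.Iio lam.ord)) := by
    rw [Ordinal.mk_Iio_ordinal, Cardinal.mk_set, Ordinal.mk_Iio_ordinal,
      Cardinal.card_ord, Cardinal.card_ord, ← Cardinal.lift_two_power]
    exact Cardinal.lift_le.mpr hle
  obtain ⟨F⟩ := Cardinal.le_def _ _ |>.mp hcard
  set C : Set Ordinal := Set.Ioo lam.ord δ.ord with hC
  have hclub : IsClubIn C δ.ord := by
    refine ⟨fun x hx => hx.2, ?_, ?_⟩
    · intro α hα
      refine ⟨max α (lam.ord + 1), ⟨?_, ?_⟩, le_max_left _ _⟩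
      · exact lt_of_lt_of_le (Order.lt_add_one_iff.mpr le_rfl) (le_max_right _ _)
      · exact max_lt hα (hlim _ hordlt)
    · intro S hS hne hlt _
      obtain ⟨s, hs⟩ := hne
      refine ⟨lt_of_lt_of_le (hS hs).1 (le_csSup ?_ hs), hlt⟩
      exact BddAbove.mono (fun x hx => (hS hx).2) bddAbove_Iio
  set A : Ordinal → Set Ordinal :=
    fun α => {γ | ∃ (hγ : γ < lam.ord) (hα : α < δ.ord), (⟨γ, hγ⟩ : Set.Iio lam.ord) ∈ F ⟨α, hα⟩}
    with hA
  have hAsub : ∀ α, A α ⊆ Set.Iio lam.ord := fun α γ hγ => hγ.1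
  obtain ⟨α, hα, β, hβ, hlt', heq⟩ := h C hclub A
    (fun α hα γ hγ => lt_trans (hAsub α hγ) hα.1)
  have hsub : A β ⊆ Set.Iio α := fun γ hγ => lt_trans (hAsub β hγ) hα.1
  have hAeq : A α = A β := heq.trans (Set.inter_eq_left.mpr hsub)
  have hF : F ⟨α, hα.2⟩ = F ⟨β, hβ.2⟩ := by
    ext ⟨γ, hγ⟩
    constructor
    · intro hm
      have : γ ∈ A α := ⟨hγ, hα.2, hm⟩
      obtain ⟨_, _, hm'⟩ := hAeq ▸ this
      exact hm'
    · intro hm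
      have : γ ∈ A β := ⟨hγ, hβ.2, hm⟩
      obtain ⟨_, _, hm'⟩ := hAeq ▸ this
      exact hm'
  have := F.injective hF
  replace this : α = β := congrArg Subtype.val this
  exact absurd (this ▸ hlt') (lt_irrefl β)
end
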